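/- Let h be a Lie algebra automorphism of gl^M_∞ and suppose f : V ≃ V is a linear equivalence satisfying f((h φ)(v)) = φ(f(v)) for all φ ∈ gl^M_∞ and v ∈ V. Then the dual map f* : V* → V* maps V_* onto V_* (in particular f*(V_*) ⊆ V_* and (f⁻¹)*(V_*) ⊆ V_*), and h(φ) = f⁻¹ ∘ φ ∘ f for all φ ∈ gl^M_∞. -/

import Mathlib

open TensorProduct

attribute [local instance 100] LieRing.ofAssociativeRing

variable {U W : Type*} [AddCommGroup U] [Module ℂ U] [AddCommGroup W] [Module ℂ W]

/-- The Mackey Lie algebra `gl^M_{U,W}`: all `φ ∈ End ℂ U` whose dual map preserves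
`W̃ = range (B.flip) ⊆ U*`. -/
noncomputable def glMackey (B : U →ₗ[ℂ] W →ₗ[ℂ] ℂ) :
    LieSubalgebra ℂ (Module.End ℂ U) where
  carrier := {φ | ∀ ξ ∈ LinearMap.range B.flip, φ.dualMap ξ ∈ LinearMap.range B.flip}
  add_mem' := by
    intro a b ha hb ξ hξ
    have h : (a + b).dualMap ξ = a.dualMap ξ + b.dualMap ξ := by ext x; simp
    rw [h]
    exact Submodule.add_mem _ (ha ξ hξ) (hb ξ hξ)
  zero_mem' := by
    intro ξ hξ
    have h : (0 : Module.End ℂ U).dualMap ξ = 0 := by ext x; simp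
    rw [h]; exact Submodule.zero_mem _
  smul_mem' := by
    intro c a ha ξ hξ
    have h : (c • a).dualMap ξ = c • a.dualMap ξ := by ext x; simp
    rw [h]
    exact Submodule.smul_mem _ _ (ha ξ hξ)
  lie_mem' := by
    intro a b ha hb ξ hξ
    have h : (⁅a, b⁆ : Module.End ℂ U).dualMap ξ
        = b.dualMap (a.dualMap ξ) - a.dualMap (b.dualMap ξ) := by
      ext x; simp [Module.End.lie_apply]
    rw [h]
    exact Submodule.sub_mem _ (hb _ (ha ξ hξ)) (ha _ (hb ξ hξ))

/-- `V = ℕ →₀ ℂ`, the countable-dimensional standard space. -/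
abbrev Vst : Type := ℕ →₀ ℂ

/-- The standard nondegenerate pairing `B x y = ∑ i, x i * y i` on `V`. -/
noncomputable def Bstd : Vst →ₗ[ℂ] Vst →ₗ[ℂ] ℂ :=
  Finsupp.lsum ℂ fun i => LinearMap.toSpanSingleton ℂ (Vst →ₗ[ℂ] ℂ) (Finsupp.lapply i)

theorem Bstd_apply (x y : Vst) : Bstd x y = x.sum fun i a => a * y i := by
  simp [Bstd, Finsupp.lapply, Finsupp.sum, smul_eq_mul]

/-- Rank-one operator `x ↦ ξ(x) • v`. -/
noncomputable def rkOne (ξ : Module.Dual ℂ Vst) (v : Vst) : Module.End ℂ Vst :=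
  (LinearMap.toSpanSingleton ℂ Vst v).comp ξ

lemma rkOne_apply (ξ : Module.Dual ℂ Vst) (v x : Vst) : rkOne ξ v x = ξ x • v := rfl

lemma rkOne_mem {ξ : Module.Dual ℂ Vst} (hξ : ξ ∈ LinearMap.range Bstd.flip) (v : Vst) :
    rkOne ξ v ∈ glMackey Bstd := by
  intro η _
  have hh : (rkOne ξ v).dualMap η = η v • ξ := by
    refine LinearMap.ext fun x => ?_
    simp [rkOne, LinearMap.dualMap_apply', mul_comm]
  rw [hh]
  exact Submodule.smul_mem _ _ hξ

lemma Bstd_ee : Bstd (Finsupp.single 0 1) (Finsupp.single 0 1) = 1 := by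
  rw [Bstd_apply]
  simp

/-- If `h` is a Lie algebra automorphism of `gl^M_∞` and `f : V ≃ V` is an isomorphism
of the twisted module `V^h` with `V` (i.e. `f ((h φ) v) = φ (f v)`), then the dual map
`f*` maps `V_* = range Bstd.flip` onto `V_*` (in particular `f*` and `(f⁻¹)*` preserve
`V_*`), and `h φ = f⁻¹ ∘ φ ∘ f` for all `φ ∈ gl^M_∞`. -/
theorem stmt_16 (h : ↥(glMackey Bstd) ≃ₗ⁅ℂ⁆ ↥(glMackey Bstd))
    (f : Vst ≃ₗ[ℂ] Vst)
    (hf : ∀ (φ : ↥(glMackey Bstd)) (v : Vst),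
      f ((h φ : Module.End ℂ Vst) v) = (φ : Module.End ℂ Vst) (f v)) :
    Submodule.map (LinearMap.dualMap (f : Vst →ₗ[ℂ] Vst)) (LinearMap.range Bstd.flip)
        = LinearMap.range Bstd.flip ∧
    (∀ ξ ∈ LinearMap.range Bstd.flip,
      LinearMap.dualMap (f : Vst →ₗ[ℂ] Vst) ξ ∈ LinearMap.range Bstd.flip) ∧
    (∀ ξ ∈ LinearMap.range Bstd.flip,
      LinearMap.dualMap (f.symm : Vst →ₗ[ℂ] Vst) ξ ∈ LinearMap.range Bstd.flip) ∧
    (∀ (φ : ↥(glMackey Bstd)) (v : Vst),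
      (h φ : Module.End ℂ Vst) v = f.symm ((φ : Module.End ℂ Vst) (f v))) := by
  set e : Vst := Finsupp.single 0 1 with he
  set η0 : Module.Dual ℂ Vst := Bstd.flip e with hη0
  have hη0mem : η0 ∈ LinearMap.range Bstd.flip := ⟨e, rfl⟩
  have hη0e : η0 e = 1 := Bstd_ee
  have hconj : ∀ (φ : ↥(glMackey Bstd)) (v : Vst),
      (h φ : Module.End ℂ Vst) v = f.symm ((φ : Module.End ℂ Vst) (f v)) := by
    intro φ v
    have := hf φ v
    apply_fun f.symm at this
    simpa using this
  -- f* preserves V_*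
  have hfwd : ∀ ξ ∈ LinearMap.range Bstd.flip,
      LinearMap.dualMap (f : Vst →ₗ[ℂ] Vst) ξ ∈ LinearMap.range Bstd.flip := by
    intro ξ hξ
    set φ : ↥(glMackey Bstd) := ⟨rkOne ξ (f e), rkOne_mem hξ _⟩ with hφ
    have hmem := (h φ).2 η0 hη0mem
    have heq : (h φ : Module.End ℂ Vst).dualMap η0
        = LinearMap.dualMap (f : Vst →ₗ[ℂ] Vst) ξ := by
      refine LinearMap.ext fun x => ?_
      have h1 : (h φ : Module.End ℂ Vst) x = f.symm ((φ : Module.End ℂ Vst) (f x)) :=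
        hconj φ x
      rw [LinearMap.dualMap_apply', LinearMap.comp_apply, h1]
      simp only [LinearMap.dualMap_apply', LinearMap.comp_apply, h1, hφ,
        rkOne_apply, map_smul, LinearEquiv.coe_coe, LinearEquiv.symm_apply_apply]
      rw [hη0e]
      simp [mul_comm]
    rwa [heq] at hmem
  -- (f⁻¹)* preserves V_*
  have hbwd : ∀ ξ ∈ LinearMap.range Bstd.flip,
      LinearMap.dualMap (f.symm : Vst →ₗ[ℂ] Vst) ξ ∈ LinearMap.range Bstd.flip := by
    intro ξ hξ
    set φ : ↥(glMackey Bstd) := ⟨rkOne ξ (f.symm e), rkOne_mem hξ _⟩ with hφ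
    have hmem := (h.symm φ).2 η0 hη0mem
    have heq : (h.symm φ : Module.End ℂ Vst).dualMap η0
        = LinearMap.dualMap (f.symm : Vst →ₗ[ℂ] Vst) ξ := by
      refine LinearMap.ext fun x => ?_
      -- hf with ψ = h.symm φ and v = f.symm x gives
      -- f (φ (f.symm x)) = (h.symm φ) x
      have h1 : (h.symm φ : Module.End ℂ Vst) x
          = f ((φ : Module.End ℂ Vst) (f.symm x)) := by
        have := hf (h.symm φ) (f.symm x)
        rw [h.apply_symm_apply, f.apply_symm_apply] at this
        exact this.symm
      rw [LinearMap.dualMap_apply', LinearMap.comp_apply, h1]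
      simp only [LinearMap.dualMap_apply', LinearMap.comp_apply, h1, hφ,
        rkOne_apply, map_smul, LinearEquiv.coe_coe, LinearEquiv.apply_symm_apply]
      rw [hη0e]
      simp [mul_comm]
    rwa [heq] at hmem
  refine ⟨?_, hfwd, hbwd, hconj⟩
  apply le_antisymm
  · rintro _ ⟨ξ, hξ, rfl⟩
    exact hfwd ξ hξ
  · intro ξ hξ
    refine ⟨LinearMap.dualMap (f.symm : Vst →ₗ[ℂ] Vst) ξ, hbwd ξ hξ, ?_⟩
    ext x
    simp [LinearMap.dualMap_apply']
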